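/- For r ∈ K, the sequence δ₀r lies in the image of F − 1 : c₀(ℤ, K) → c₀(ℤ, K), i.e. there exists b ∈ c₀(ℤ, K) with (b_{i−1})^q − b_i equal to r for i = 0 and to 0 for all i ≠ 0, if and only if ‖r‖ < 1 (i.e. r ∈ K^{++}). -/

import Mathlib

open Filter

/-- A two-sided sequence `b : ℤ → K` tends to `0` as `|i| → ∞`,
i.e. it lies in `c₀(ℤ, K)`. -/
def IsC0 {K : Type*} [NormedField K] (b : ℤ → K) : Prop :=
  Tendsto b cofinite (nhds 0)

/-- For `r ∈ K`, the sequence `δ₀ r` (value `r` at index `0`, zero elsewhere) lies in the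
image of `F - 1 : c₀(ℤ, K) → c₀(ℤ, K)` if and only if `‖r‖ < 1`, i.e. `r ∈ K^{++}`. -/
theorem delta_mem_range_FSubOne_iff
    (p f q : ℕ) (hp : p.Prime) (hf : 1 ≤ f) (hq : q = p ^ f)
    (K : Type*) [NontriviallyNormedField K] [IsUltrametricDist K]
    [CompleteSpace K] [CharP K p]
    (r : K) :
    (∃ b : ℤ → K, IsC0 b ∧
        ∀ i : ℤ, (b (i - 1)) ^ q - b i = if i = 0 then r else 0) ↔ ‖r‖ < 1 := by
  have hq2 : 2 ≤ q := by
    rw [hq]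
    calc 2 ≤ p := hp.two_le
    _ ≤ p ^ f := Nat.le_self_pow (by omega) p
  have hq0 : q ≠ 0 := by omega
  constructor
  · rintro ⟨b, hb, h⟩
    have hne : ∀ i : ℤ, i ≠ 0 → b i = b (i - 1) ^ q := by
      intro i hi
      have := h i
      rw [if_neg hi, sub_eq_zero] at this
      exact this.symm
    -- the set of indices where the norm is ≥ 1 is finite
    have hfin : {i : ℤ | ¬ ‖b i‖ < 1}.Finite := by
      have h1 := hb (Metric.ball_mem_nhds (0 : K) one_pos)
      rw [Filter.mem_map, Filter.mem_cofinite] at h1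
      refine h1.subset fun i hi => ?_
      simpa [Metric.mem_ball, dist_zero_right] using hi
    -- positive side: b (n+1) = b 0 ^ q ^ (n+1)
    have hpos : ∀ n : ℕ, b ((n : ℤ) + 1) = b 0 ^ q ^ (n + 1) := by
      intro n
      induction n with
      | zero => simpa using hne 1 one_ne_zero
      | succ m ih =>
        have h1 : ((m : ℤ) + 1 + 1) ≠ 0 := by omega
        have := hne _ h1
        rw [show ((m : ℤ) + 1 + 1 - 1) = (m : ℤ) + 1 by ring, ih, ← pow_mul, ← pow_succ] at this
        exact this
    have hb0 : ‖b 0‖ < 1 := by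
      by_contra hge
      push_neg at hge
      refine (Set.infinite_of_injective_forall_mem
          (f := fun n : ℕ => (n : ℤ) + 1)
          (fun a b hab => by dsimp only at hab; omega)
          (fun n => ?_)) hfin
      simp only [Set.mem_setOf_eq, not_lt, hpos n, norm_pow]
      exact one_le_pow₀ hge
    -- negative side: b (-1) = b (-1 - n) ^ q ^ n
    have hneg : ∀ n : ℕ, b (-1) = b (-1 - (n : ℤ)) ^ q ^ n := by
      intro n
      induction n with
      | zero => simp
      | succ m ih =>
        have h1 : (-1 - (m : ℤ)) ≠ 0 := by omega
        rw [ih, hne _ h1, ← pow_mul, show (-1 - (m : ℤ) - 1) = -1 - ((m : ℕ) + 1 : ℤ) by ring,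
          mul_comm, ← pow_succ]
        norm_cast
    have hbm1 : ‖b (-1)‖ < 1 := by
      -- find n with ‖b (-1 - n)‖ < 1
      obtain ⟨n, hn⟩ : ∃ n : ℕ, ‖b (-1 - (n : ℤ))‖ < 1 := by
        by_contra hc
        push_neg at hc
        exact (Set.infinite_of_injective_forall_mem
          (f := fun n : ℕ => (-1 - (n : ℤ)))
          (fun a b hab => by dsimp only at hab; omega)
          (fun n => by simpa using not_lt.mpr (hc n))) hfin
      rw [hneg n, norm_pow]
      exact pow_lt_one₀ (norm_nonneg _) hn (pow_ne_zero n hq0)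
    have h0 := h 0
    rw [if_pos rfl] at h0
    rw [← h0]
    calc ‖b (0 - 1) ^ q - b 0‖ ≤ max ‖b (0 - 1) ^ q‖ ‖b 0‖ := by
          rw [sub_eq_add_neg]
          exact (IsUltrametricDist.norm_add_le_max _ _).trans (by rw [norm_neg])
    _ < 1 := by
        apply max_lt _ hb0
        rw [norm_pow, show (0 : ℤ) - 1 = -1 by ring]
        exact pow_lt_one₀ (norm_nonneg _) hbm1 hq0
  · intro hr
    refine ⟨fun i => if 0 ≤ i then (-r) ^ q ^ i.toNat else 0, ?_, ?_⟩
    · rw [IsC0, Int.cofinite_eq, tendsto_sup]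
      constructor
      · apply Tendsto.congr' _ tendsto_const_nhds
        filter_upwards [eventually_le_atBot (-1 : ℤ)] with i hi
        rw [if_neg (by omega)]
      · have htoNat : Tendsto Int.toNat atTop atTop :=
          tendsto_atTop_atTop.mpr fun n => ⟨(n : ℤ), fun i hi => by omega⟩
        refine squeeze_zero_norm' (a := fun i : ℤ => ‖r‖ ^ i.toNat) ?_
          ((tendsto_pow_atTop_nhds_zero_of_lt_one (norm_nonneg r) hr).comp htoNat)
        filter_upwards [eventually_ge_atTop (0 : ℤ)] with i hi
        rw [if_pos hi, norm_pow, norm_neg]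
        exact pow_le_pow_of_le_one (norm_nonneg r) hr.le
          (Nat.le_of_lt (Nat.lt_pow_self (by omega : 1 < q)))
    · intro i
      dsimp only
      rcases lt_trichotomy i 0 with hi | hi | hi
      · rw [if_neg hi.ne, if_neg (by omega), if_neg (by omega), zero_pow hq0, sub_zero]
      · subst hi
        rw [if_pos rfl, if_neg (by norm_num), if_pos le_rfl, zero_pow hq0]
        simp
      · rw [if_neg hi.ne', if_pos (by omega), if_pos hi.le, ← pow_mul, ← pow_succ,
          show (i - 1).toNat + 1 = i.toNat by omega, sub_self]
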